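/- The quotient group G(M)/G(F) is cyclic of order c/(gcd(a,c)·gcd(b,c)), where G(M) is the subgroup of ℤ² generated by M and G(F) is the subgroup generated by (c/gcd(a,c), 0) and (0, c/gcd(b,c)). -/

import Mathlib

theorem stmt_8 (a b c : ℕ) (hc : 0 < c) (ha : 1 ≤ a) (ha' : a < c) (hb : 1 ≤ b) (hb' : b < c)
    (hgcd : Nat.gcd a (Nat.gcd b c) = 1)
    (M : Set (ℤ × ℤ))
    (hM : M = {p | 0 ≤ p.1 ∧ 0 ≤ p.2 ∧ (c : ℤ) ∣ a * p.1 + b * p.2})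
    (GM GF : AddSubgroup (ℤ × ℤ))
    (hGM : GM = AddSubgroup.closure M)
    (hGF : GF = AddSubgroup.closure
      ({(((c / Nat.gcd a c : ℕ) : ℤ), 0), (0, ((c / Nat.gcd b c : ℕ) : ℤ))} : Set (ℤ × ℤ))) :
    Nonempty ((GM ⧸ GF.addSubgroupOf GM) ≃+
      ZMod (c / (Nat.gcd a c * Nat.gcd b c))) := by
  classical
  set da := Nat.gcd a c with hdaDef
  set db := Nat.gcd b c with hdbDef
  set n := c / (da * db) with hnDef
  have hda0 : 0 < da := Nat.gcd_pos_of_pos_right _ hc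
  have hdb0 : 0 < db := Nat.gcd_pos_of_pos_right _ hc
  -- coprimality facts
  have hgcd' : Nat.gcd (Nat.gcd a b) c = 1 := by
    rw [Nat.gcd_assoc]; exact hgcd
  have hgcd2 : Nat.gcd b da = 1 := by
    rw [hdaDef, ← Nat.gcd_assoc, Nat.gcd_comm b a, Nat.gcd_assoc]
    exact hgcd
  have hco : Nat.Coprime da db := by
    have h1 : Nat.gcd da db ∣ Nat.gcd a (Nat.gcd b c) :=
      Nat.dvd_gcd ((Nat.gcd_dvd_left da db).trans (Nat.gcd_dvd_left a c))
        (Nat.gcd_dvd_right da db)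
    exact Nat.eq_one_of_dvd_one (hgcd ▸ h1)
  have hdvd : da * db ∣ c :=
    Nat.Coprime.mul_dvd_of_dvd_of_dvd hco (Nat.gcd_dvd_right a c) (Nat.gcd_dvd_right b c)
  have hcn : da * db * n = c := Nat.mul_div_cancel' hdvd
  have hn0 : 0 < n := Nat.div_pos (Nat.le_of_dvd hc hdvd) (by positivity)
  haveI : NeZero n := ⟨hn0.ne'⟩
  set a' := a / da with ha'Def
  set b' := b / db with hb'Def
  have haa : da * a' = a := Nat.mul_div_cancel' (Nat.gcd_dvd_left a c)
  have hbb : db * b' = b := Nat.mul_div_cancel' (Nat.gcd_dvd_left b c)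
  have hcda : c / da = db * n := by
    rw [← hcn, show da * db * n = da * (db * n) by ring,
      Nat.mul_div_cancel_left _ hda0]
  have hcdb : c / db = da * n := by
    rw [← hcn, show da * db * n = db * (da * n) by ring,
      Nat.mul_div_cancel_left _ hdb0]
  have hcopa : Nat.Coprime a' n := by
    have h := Nat.coprime_div_gcd_div_gcd (m := a) (n := c) hda0
    rw [← hdaDef, ← ha'Def, hcda] at h
    exact Nat.Coprime.coprime_dvd_right (dvd_mul_left n db) h
  have hcopb : Nat.Coprime b' n := by
    have h := Nat.coprime_div_gcd_div_gcd (m := b) (n := c) hdb0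
    rw [← hdbDef, ← hb'Def, hcdb] at h
    exact Nat.Coprime.coprime_dvd_right (dvd_mul_left n da) h
  have hcopg : Nat.Coprime (Nat.gcd a b) n :=
    Nat.Coprime.coprime_dvd_right ⟨da * db, by rw [← hcn]; ring⟩ hgcd'
  -- characterization of GM
  have hGMmem : ∀ p : ℤ × ℤ, p ∈ GM ↔ (c : ℤ) ∣ (a : ℤ) * p.1 + (b : ℤ) * p.2 := by
    have hMc : ∀ p : ℤ × ℤ, p ∈ M → (c : ℤ) ∣ (a : ℤ) * p.1 + (b : ℤ) * p.2 := by
      intro p hp; rw [hM] at hp; exact hp.2.2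
    intro p
    constructor
    · intro hp
      rw [hGM] at hp
      induction hp using AddSubgroup.closure_induction with
      | mem x hx => exact hMc x hx
      | zero => simp
      | add x y hx hy hpx hpy =>
        have : (c:ℤ) ∣ (a:ℤ) * x.1 + (b:ℤ) * x.2 + ((a:ℤ) * y.1 + (b:ℤ) * y.2) := dvd_add hpx hpy
        convert this using 1
        simp [Prod.fst_add, Prod.snd_add]; ring
      | neg x hx hpx =>
        have : (c:ℤ) ∣ -((a:ℤ) * x.1 + (b:ℤ) * x.2) := dvd_neg.2 hpx
        convert this using 1
        simp; ring
    · intro hp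
      rw [hGM]
      have hc0 : ((c : ℤ), (0:ℤ)) ∈ M := by
        rw [hM]
        refine ⟨by positivity, le_refl _, ⟨a, by push_cast; ring⟩⟩
      have h0c : ((0:ℤ), (c : ℤ)) ∈ M := by
        rw [hM]
        refine ⟨le_refl _, by positivity, ⟨b, by push_cast; ring⟩⟩
      have hq : ((p.1 + |p.1| * c, p.2 + |p.2| * c) : ℤ × ℤ) ∈ M := by
        rw [hM]
        refine ⟨?_, ?_, ?_⟩
        · have h1 : |p.1| * 1 ≤ |p.1| * c := by
            apply mul_le_mul_of_nonneg_left _ (abs_nonneg _)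
            exact_mod_cast hc
          have h2 : 0 ≤ p.1 + |p.1| := by
            rcases abs_cases p.1 with ⟨h, _⟩ | ⟨h, _⟩ <;> omega
          simp only [mul_one] at h1
          omega
        · have h1 : |p.2| * 1 ≤ |p.2| * c := by
            apply mul_le_mul_of_nonneg_left _ (abs_nonneg _)
            exact_mod_cast hc
          have h2 : 0 ≤ p.2 + |p.2| := by
            rcases abs_cases p.2 with ⟨h, _⟩ | ⟨h, _⟩ <;> omega
          simp only [mul_one] at h1
          omega
        · obtain ⟨k, hk⟩ := hp
          exact ⟨k + a * |p.1| + b * |p.2|, by push_cast; linear_combination hk⟩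
      have hrepr : p = ((p.1 + |p.1| * c, p.2 + |p.2| * c) : ℤ × ℤ)
          - |p.1| • ((c : ℤ), (0:ℤ)) - |p.2| • ((0:ℤ), (c : ℤ)) := by
        refine Prod.ext ?_ ?_ <;> simp <;> ring
      rw [hrepr]
      exact sub_mem (sub_mem (AddSubgroup.subset_closure hq)
        (zsmul_mem (AddSubgroup.subset_closure hc0) _))
        (zsmul_mem (AddSubgroup.subset_closure h0c) _)
  -- characterization of GF
  have hca1 : ((c / da : ℕ) : ℤ) = (db : ℤ) * n := by rw [hcda]; push_cast; ring
  have hcb1 : ((c / db : ℕ) : ℤ) = (da : ℤ) * n := by rw [hcdb]; push_cast; ring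
  have hGFmem : ∀ p : ℤ × ℤ, p ∈ GF ↔
      ((db : ℤ) * n ∣ p.1 ∧ (da : ℤ) * n ∣ p.2) := by
    intro p
    rw [hGF]
    constructor
    · intro hp
      induction hp using AddSubgroup.closure_induction with
      | mem x hx =>
        simp only [Set.mem_insert_iff, Set.mem_singleton_iff] at hx
        rcases hx with h | h
        · rw [h]; exact ⟨⟨1, by rw [hca1]; ring⟩, ⟨0, by simp⟩⟩
        · rw [h]; exact ⟨⟨0, by simp⟩, ⟨1, by rw [hcb1]; ring⟩⟩
      | zero => simp
      | add x y hx hy hpx hpy =>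
        exact ⟨dvd_add hpx.1 hpy.1, dvd_add hpx.2 hpy.2⟩
      | neg x hx hpx =>
        exact ⟨dvd_neg.2 hpx.1, dvd_neg.2 hpx.2⟩
    · rintro ⟨⟨i, hi⟩, ⟨j, hj⟩⟩
      have hrepr : p = i • (((c / da : ℕ) : ℤ), (0:ℤ)) + j • ((0:ℤ), ((c / db : ℕ) : ℤ)) := by
        have hcomb : i • (((c / da : ℕ) : ℤ), (0:ℤ)) + j • ((0:ℤ), ((c / db : ℕ) : ℤ))
            = (i * ((c / da : ℕ) : ℤ), j * ((c / db : ℕ) : ℤ)) := by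
          refine Prod.ext ?_ ?_ <;> simp
        rw [hcomb, hca1, hcb1]
        refine Prod.ext ?_ ?_
        · rw [hi]; ring
        · rw [hj]; ring
      rw [hrepr]
      exact add_mem (zsmul_mem (AddSubgroup.subset_closure (by simp)) _)
        (zsmul_mem (AddSubgroup.subset_closure (by simp)) _)
  have h1Z : (da : ℤ) * (a' : ℤ) = (a : ℤ) := by exact_mod_cast haa
  have h2Z : (db : ℤ) * (b' : ℤ) = (b : ℤ) := by exact_mod_cast hbb
  -- decomposition of elements of GM
  have hdecomp : ∀ p : ℤ × ℤ, p ∈ GM →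
      ∃ s t : ℤ, p.1 = (db : ℤ) * s ∧ p.2 = (da : ℤ) * t ∧
        ((a' : ZMod n) * (s : ZMod n) + (b' : ZMod n) * (t : ZMod n) = 0) := by
    intro p hp
    rw [hGMmem] at hp
    have hdbx : (db : ℤ) ∣ p.1 := by
      have h1 : (db : ℤ) ∣ (a : ℤ) * p.1 + (b : ℤ) * p.2 :=
        dvd_trans (by exact_mod_cast Nat.gcd_dvd_right b c) hp
      have h2 : (db : ℤ) ∣ (b : ℤ) * p.2 :=
        dvd_mul_of_dvd_left (by exact_mod_cast Nat.gcd_dvd_left b c) _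
      have h3 : (db : ℤ) ∣ (a : ℤ) * p.1 := by
        have := dvd_sub h1 h2
        simpa using this
      have hcop : IsCoprime (db : ℤ) (a : ℤ) :=
        Nat.isCoprime_iff_coprime.2 (Nat.Coprime.symm hgcd)
      exact hcop.dvd_of_dvd_mul_left h3
    have hday : (da : ℤ) ∣ p.2 := by
      have h1 : (da : ℤ) ∣ (a : ℤ) * p.1 + (b : ℤ) * p.2 :=
        dvd_trans (by exact_mod_cast Nat.gcd_dvd_right a c) hp
      have h2 : (da : ℤ) ∣ (a : ℤ) * p.1 :=
        dvd_mul_of_dvd_left (by exact_mod_cast Nat.gcd_dvd_left a c) _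
      have h3 : (da : ℤ) ∣ (b : ℤ) * p.2 := by
        have := dvd_sub h1 h2
        simpa using this
      have hcop : IsCoprime (da : ℤ) (b : ℤ) :=
        Nat.isCoprime_iff_coprime.2 (Nat.Coprime.symm hgcd2)
      exact hcop.dvd_of_dvd_mul_left h3
    obtain ⟨s, hs⟩ := hdbx
    obtain ⟨t, ht⟩ := hday
    refine ⟨s, t, hs, ht, ?_⟩
    have hint : (n : ℤ) ∣ (a' : ℤ) * s + (b' : ℤ) * t := by
      have hc' : ((da : ℤ) * db * n) ∣ (a : ℤ) * p.1 + (b : ℤ) * p.2 := by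
        have hcast : ((da * db * n : ℕ) : ℤ) = (da : ℤ) * db * n := by push_cast; ring
        rw [← hcast, hcn]; exact hp
      have heq : (a : ℤ) * p.1 + (b : ℤ) * p.2
          = (da : ℤ) * db * ((a' : ℤ) * s + (b' : ℤ) * t) := by
        rw [hs, ht, ← h1Z, ← h2Z]; ring
      rw [heq] at hc'
      have hne : (da : ℤ) * db ≠ 0 := by positivity
      rcases hc' with ⟨k, hk⟩
      refine ⟨k, ?_⟩
      have : (da : ℤ) * db * ((a' : ℤ) * s + (b' : ℤ) * t)
          = (da : ℤ) * db * ((n : ℤ) * k) := by rw [hk]; ring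
      exact mul_left_cancel₀ hne this
    have hcast := (ZMod.intCast_zmod_eq_zero_iff_dvd ((a' : ℤ) * s + (b' : ℤ) * t) n).2 hint
    push_cast at hcast
    exact hcast
  -- the homomorphism
  set u : ℤ := -(Nat.gcdB a b) with huDef
  set v : ℤ := Nat.gcdA a b with hvDef
  have hbez : (a : ℤ) * v - (b : ℤ) * u = (Nat.gcd a b : ℤ) := by
    rw [huDef, hvDef]
    have h := Nat.gcd_eq_gcd_ab a b
    linear_combination -h
  set A : ZMod n := (a' : ZMod n) with hA
  set B : ZMod n := (b' : ZMod n) with hB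
  set W : ZMod n := ((Nat.gcd a b : ℕ) : ZMod n) with hW
  have hAunit : IsUnit A := (ZMod.isUnit_iff_coprime a' n).2 hcopa
  have hWunit : IsUnit W := (ZMod.isUnit_iff_coprime (Nat.gcd a b) n).2 hcopg
  have hdaA : (da : ZMod n) * A = (a : ZMod n) := by
    rw [hA]; exact_mod_cast congrArg (Nat.cast : ℕ → ZMod n) haa
  have hdbB : (db : ZMod n) * B = (b : ZMod n) := by
    rw [hB]; exact_mod_cast congrArg (Nat.cast : ℕ → ZMod n) hbb
  have hWeq : (a : ZMod n) * ((v : ℤ) : ZMod n) - (b : ZMod n) * ((u : ℤ) : ZMod n) = W := by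
    have h := congrArg (Int.cast : ℤ → ZMod n) hbez
    push_cast at h
    exact h
  set f : ℤ × ℤ →+ ℤ := AddMonoidHom.mk' (fun p => u * p.1 + v * p.2) (by intro p q; simp; ring)
    with hf
  set φ : GM →+ ZMod n := (Int.castAddHom (ZMod n)).comp (f.comp GM.subtype) with hφ
  have hφval : ∀ (p : ℤ × ℤ) (hp : p ∈ GM),
      φ ⟨p, hp⟩ = ((u * p.1 + v * p.2 : ℤ) : ZMod n) := fun p hp => rfl
  -- key computation
  have hkey : ∀ s t : ℤ, A * (((u : ℤ) : ZMod n) * (db : ZMod n) * (s : ZMod n)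
        + ((v : ℤ) : ZMod n) * (da : ZMod n) * (t : ZMod n)) =
      W * (t : ZMod n) + (((u : ℤ) : ZMod n) * (db : ZMod n)) * (A * s + B * t) := by
    intro s t
    linear_combination (((v : ℤ) : ZMod n) * (t : ZMod n)) * hdaA
      - (((u : ℤ) : ZMod n) * (t : ZMod n)) * hdbB + (t : ZMod n) * hWeq
  -- kernel equals GF.addSubgroupOf GM
  have hker : φ.ker = GF.addSubgroupOf GM := by
    ext ⟨p, hp⟩
    rw [AddMonoidHom.mem_ker, AddSubgroup.mem_addSubgroupOf, hφval p hp, hGFmem]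
    obtain ⟨s, t, hs, ht, hrel⟩ := hdecomp p hp
    constructor
    · intro h0
      have h0' : ((u * ((db : ℤ) * s) + v * ((da : ℤ) * t) : ℤ) : ZMod n) = 0 := by
        rw [← hs, ← ht]; exact h0
      push_cast at h0'
      have h2 : ((u : ℤ) : ZMod n) * (db : ZMod n) * (s : ZMod n)
          + ((v : ℤ) : ZMod n) * (da : ZMod n) * (t : ZMod n) = 0 := by
        linear_combination h0'
      have hWt : W * (t : ZMod n) = 0 := by
        have h := hkey s t
        rw [h2, hrel] at h
        simpa using h.symm
      have ht0 : (t : ZMod n) = 0 := (hWunit.mul_right_eq_zero).1 hWt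
      have hs0 : (s : ZMod n) = 0 := by
        have hAs : A * (s : ZMod n) = 0 := by
          rw [ht0] at hrel; simpa using hrel
        exact (hAunit.mul_right_eq_zero).1 hAs
      have hns : (n : ℤ) ∣ s := (ZMod.intCast_zmod_eq_zero_iff_dvd s n).1 hs0
      have hnt : (n : ℤ) ∣ t := (ZMod.intCast_zmod_eq_zero_iff_dvd t n).1 ht0
      exact ⟨by rw [hs]; exact mul_dvd_mul_left _ hns,
        by rw [ht]; exact mul_dvd_mul_left _ hnt⟩
    · rintro ⟨⟨i, hi⟩, ⟨j, hj⟩⟩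
      have hdvd' : (n : ℤ) ∣ u * p.1 + v * p.2 := by
        rw [hi, hj]; exact ⟨u * (db * i) + v * (da * j), by ring⟩
      exact (ZMod.intCast_zmod_eq_zero_iff_dvd _ n).2 hdvd'
  -- surjectivity
  have hsurj : Function.Surjective φ := by
    intro z
    set UA := hAunit.unit with hUA
    set UW := hWunit.unit with hUW
    obtain ⟨t, htz⟩ := ZMod.intCast_surjective (n := n)
      ((UA : ZMod n) * ((UW⁻¹ : (ZMod n)ˣ) : ZMod n) * z)
    obtain ⟨s, hsz⟩ := ZMod.intCast_surjective (n := n)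
      (-(((UA⁻¹ : (ZMod n)ˣ) : ZMod n) * B * (t : ZMod n)))
    have hAval : (UA : ZMod n) = A := hAunit.unit_spec
    have hWval : (UW : ZMod n) = W := hWunit.unit_spec
    have hrel : A * (s : ZMod n) + B * (t : ZMod n) = 0 := by
      rw [hsz]
      have hre : A * -(((UA⁻¹ : (ZMod n)ˣ) : ZMod n) * B * (t : ZMod n))
          = -((A * ((UA⁻¹ : (ZMod n)ˣ) : ZMod n)) * B * (t : ZMod n)) := by ring
      rw [hre, ← hAval, Units.mul_inv]
      ring
    have hpGM : (((db : ℤ) * s, (da : ℤ) * t) : ℤ × ℤ) ∈ GM := by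
      rw [hGMmem]
      have heq : (a : ℤ) * ((db : ℤ) * s) + (b : ℤ) * ((da : ℤ) * t)
          = (da : ℤ) * db * ((a' : ℤ) * s + (b' : ℤ) * t) := by
        rw [← h1Z, ← h2Z]; ring
      have hn' : (n : ℤ) ∣ (a' : ℤ) * s + (b' : ℤ) * t := by
        rw [← ZMod.intCast_zmod_eq_zero_iff_dvd]
        push_cast
        exact hrel
      obtain ⟨k, hk⟩ := hn'
      refine ⟨k, ?_⟩
      simp only
      rw [heq, hk, ← hcn]; push_cast; ring
    refine ⟨⟨((db : ℤ) * s, (da : ℤ) * t), hpGM⟩, ?_⟩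
    rw [hφval]
    have hval : ((u * ((db : ℤ) * s) + v * ((da : ℤ) * t) : ℤ) : ZMod n)
        = ((u : ℤ) : ZMod n) * (db : ZMod n) * (s : ZMod n)
          + ((v : ℤ) : ZMod n) * (da : ZMod n) * (t : ZMod n) := by
      push_cast; ring
    rw [hval]
    have hk := hkey s t
    rw [hrel, mul_zero, add_zero] at hk
    -- now: A * E = W * t, so E = UA⁻¹ * W * t
    have hE : ((u : ℤ) : ZMod n) * (db : ZMod n) * (s : ZMod n)
        + ((v : ℤ) : ZMod n) * (da : ZMod n) * (t : ZMod n)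
        = ((UA⁻¹ : (ZMod n)ˣ) : ZMod n) * (W * (t : ZMod n)) := by
      have h := congrArg (fun x => ((UA⁻¹ : (ZMod n)ˣ) : ZMod n) * x) hk
      rw [← h, ← hAval,
        show ((UA⁻¹ : (ZMod n)ˣ) : ZMod n) * ((UA : ZMod n) * (((u : ℤ) : ZMod n) * (db : ZMod n) * (s : ZMod n) + ((v : ℤ) : ZMod n) * (da : ZMod n) * (t : ZMod n))) = (((UA⁻¹ : (ZMod n)ˣ) : ZMod n) * (UA : ZMod n)) * (((u : ℤ) : ZMod n) * (db : ZMod n) * (s : ZMod n) + ((v : ℤ) : ZMod n) * (da : ZMod n) * (t : ZMod n)) from by ring,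
        Units.inv_mul, one_mul]
    rw [hE, htz, ← hWval,
      show ((UA⁻¹ : (ZMod n)ˣ) : ZMod n) * ((UW : ZMod n) * ((UA : ZMod n) * ((UW⁻¹ : (ZMod n)ˣ) : ZMod n) * z)) = (((UA⁻¹ : (ZMod n)ˣ) : ZMod n) * (UA : ZMod n)) * ((UW : ZMod n) * ((UW⁻¹ : (ZMod n)ˣ) : ZMod n)) * z from by ring,
      Units.inv_mul, Units.mul_inv, one_mul, one_mul]
  -- conclude
  exact ⟨(QuotientAddGroup.quotientAddEquivOfEq hker.symm).trans
    (QuotientAddGroup.quotientKerEquivOfSurjective φ hsurj)⟩
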